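/- Bounding λ away from zero along a constant-radius curve: assume (A)–(G), let ϱ ∈ (r₋,r₊) with Γ_ϱ ≠ ∅, and assume that for every ε > 0 there exist v₁ ≥ v₀ and c > 0 such that |Q(u_ϱ(v),v) − Q₊| + |ϖ(u_ϱ(v),v) − ϖ₊| < ε and 0 < c ≤ κ(u_ϱ(v),v) ≤ 1 for all v ≥ v₁. Then there exist constants C₁, C₂ > 0 such that −C₂ ≤ λ(u_ϱ(v),v) ≤ −C₁ < 0 for all v ≥ v₁. -/

import Mathlib

/-!
Common framework: the spherically symmetric Einstein–Maxwell–charged-Klein–Gordon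
first-order system, its characteristic initial value problem, and the
black-hole interior setting of the paper.
-/

noncomputable section

open Real Set Filter MeasureTheory Topology

/-- Partial derivative in the first (ingoing, `u`) variable. -/
def pdu (f : ℝ → ℝ → ℝ) (u v : ℝ) : ℝ := deriv (fun x => f x v) u

/-- Partial derivative in the second (outgoing, `v`) variable. -/
def pdv (f : ℝ → ℝ → ℝ) (u v : ℝ) : ℝ := deriv (fun y => f u y) v

/-- Partial `u`-derivative of a complex-valued function. -/
def pduC (f : ℝ → ℝ → ℂ) (u v : ℝ) : ℂ := deriv (fun x => f x v) u

/-- Partial `v`-derivative of a complex-valued function. -/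
def pdvC (f : ℝ → ℝ → ℂ) (u v : ℝ) : ℂ := deriv (fun y => f u y) v

/-- `(1−μ)(x, ϖp, Qp)` of the reference Reissner–Nordström–de Sitter solution. -/
def oneMinusMu (Λ ϖp Qp x : ℝ) : ℝ := 1 - 2 * ϖp / x + Qp ^ 2 / x ^ 2 - Λ / 3 * x ^ 2

/-- `(1/2)∂_r(1−μ)(x, ϖp, Qp)`, the surface-gravity function of the reference solution. -/
def Kofr (Λ ϖp Qp x : ℝ) : ℝ := ϖp / x ^ 2 - Qp ^ 2 / x ^ 3 - Λ / 3 * x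

/-- The unknowns of the first-order system. -/
structure FOVars where
  r : ℝ → ℝ → ℝ
  ν : ℝ → ℝ → ℝ
  lam : ℝ → ℝ → ℝ
  ϖ : ℝ → ℝ → ℝ
  κ : ℝ → ℝ → ℝ
  Q : ℝ → ℝ → ℝ
  A : ℝ → ℝ → ℝ
  φ : ℝ → ℝ → ℂ
  θ : ℝ → ℝ → ℂ
  ζ : ℝ → ℝ → ℂ

namespace FOVars

/-- `μ := 2ϖ/r − Q²/r² + (Λ/3) r²`. -/
def μ (S : FOVars) (Λ : ℝ) (u v : ℝ) : ℝ :=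
  2 * S.ϖ u v / S.r u v - (S.Q u v) ^ 2 / (S.r u v) ^ 2 + Λ / 3 * (S.r u v) ^ 2

/-- `Ω² := −4νκ`. -/
def Ω2 (S : FOVars) (u v : ℝ) : ℝ := -4 * S.ν u v * S.κ u v

/-- `log Ω²`. -/
def logΩ2 (S : FOVars) (u v : ℝ) : ℝ := Real.log (S.Ω2 u v)

/-- Gauge covariant derivative `D_u = ∂_u + i q A_u`. -/
def Du (S : FOVars) (q : ℝ) (f : ℝ → ℝ → ℂ) (u v : ℝ) : ℂ :=
  pduC f u v + Complex.I * (q : ℂ) * ((S.A u v : ℝ) : ℂ) * f u v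

/-- The dynamical surface gravity `K := ϖ/r² − Q²/r³ − (Λ/3) r`. -/
def Kfun (S : FOVars) (Λ : ℝ) (u v : ℝ) : ℝ :=
  S.ϖ u v / (S.r u v) ^ 2 - (S.Q u v) ^ 2 / (S.r u v) ^ 3 - Λ / 3 * S.r u v

/-- A solution of the first-order Einstein–Maxwell–charged-Klein–Gordon system on `D`:
all unknowns are continuous on `D`, all partial derivatives appearing in the system are
continuous on `D`, the functions `r`, `ν`, `κ` do not vanish, and all the equations
together with the algebraic constraint `λ = κ(1−μ)` hold on `D`. -/
structure IsSolOn (S : FOVars) (Λ q m : ℝ) (D : Set (ℝ × ℝ)) : Prop where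
  cont_r : ContinuousOn (fun p : ℝ × ℝ => S.r p.1 p.2) D
  cont_ν : ContinuousOn (fun p : ℝ × ℝ => S.ν p.1 p.2) D
  cont_lam : ContinuousOn (fun p : ℝ × ℝ => S.lam p.1 p.2) D
  cont_ϖ : ContinuousOn (fun p : ℝ × ℝ => S.ϖ p.1 p.2) D
  cont_κ : ContinuousOn (fun p : ℝ × ℝ => S.κ p.1 p.2) D
  cont_Q : ContinuousOn (fun p : ℝ × ℝ => S.Q p.1 p.2) D
  cont_A : ContinuousOn (fun p : ℝ × ℝ => S.A p.1 p.2) D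
  cont_φ : ContinuousOn (fun p : ℝ × ℝ => S.φ p.1 p.2) D
  cont_θ : ContinuousOn (fun p : ℝ × ℝ => S.θ p.1 p.2) D
  cont_ζ : ContinuousOn (fun p : ℝ × ℝ => S.ζ p.1 p.2) D
  cont_pdu_r : ContinuousOn (fun p : ℝ × ℝ => pdu S.r p.1 p.2) D
  cont_pdv_r : ContinuousOn (fun p : ℝ × ℝ => pdv S.r p.1 p.2) D
  cont_pdu_φ : ContinuousOn (fun p : ℝ × ℝ => pduC S.φ p.1 p.2) D
  cont_pdv_φ : ContinuousOn (fun p : ℝ × ℝ => pdvC S.φ p.1 p.2) D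
  cont_pdv_ν : ContinuousOn (fun p : ℝ × ℝ => pdv S.ν p.1 p.2) D
  cont_pdu_lam : ContinuousOn (fun p : ℝ × ℝ => pdu S.lam p.1 p.2) D
  cont_pdu_ϖ : ContinuousOn (fun p : ℝ × ℝ => pdu S.ϖ p.1 p.2) D
  cont_pdv_ϖ : ContinuousOn (fun p : ℝ × ℝ => pdv S.ϖ p.1 p.2) D
  cont_pdu_θ : ContinuousOn (fun p : ℝ × ℝ => pduC S.θ p.1 p.2) D
  cont_pdv_ζ : ContinuousOn (fun p : ℝ × ℝ => pdvC S.ζ p.1 p.2) D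
  cont_pdu_κ : ContinuousOn (fun p : ℝ × ℝ => pdu S.κ p.1 p.2) D
  cont_pdu_Q : ContinuousOn (fun p : ℝ × ℝ => pdu S.Q p.1 p.2) D
  cont_pdv_Q : ContinuousOn (fun p : ℝ × ℝ => pdv S.Q p.1 p.2) D
  cont_pdv_A : ContinuousOn (fun p : ℝ × ℝ => pdv S.A p.1 p.2) D
  r_ne : ∀ ⦃u v : ℝ⦄, (u, v) ∈ D → S.r u v ≠ 0
  ν_ne : ∀ ⦃u v : ℝ⦄, (u, v) ∈ D → S.ν u v ≠ 0
  κ_ne : ∀ ⦃u v : ℝ⦄, (u, v) ∈ D → S.κ u v ≠ 0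
  eq_r_u : ∀ ⦃u v : ℝ⦄, (u, v) ∈ D → pdu S.r u v = S.ν u v
  eq_r_v : ∀ ⦃u v : ℝ⦄, (u, v) ∈ D → pdv S.r u v = S.lam u v
  eq_φ_u : ∀ ⦃u v : ℝ⦄, (u, v) ∈ D →
    S.Du q S.φ u v = S.ζ u v / ((S.r u v : ℝ) : ℂ)
  eq_φ_v : ∀ ⦃u v : ℝ⦄, (u, v) ∈ D →
    pdvC S.φ u v = S.θ u v / ((S.r u v : ℝ) : ℂ)
  eq_ν_v : ∀ ⦃u v : ℝ⦄, (u, v) ∈ D →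
    pdv S.ν u v = -2 * S.ν u v * S.κ u v / (S.r u v) ^ 2 *
      ((S.Q u v) ^ 2 / S.r u v + m ^ 2 * (S.r u v) ^ 3 * ‖(S.φ u v)‖ ^ 2 / 2 +
        Λ / 3 * (S.r u v) ^ 3 - S.ϖ u v)
  eq_lam_u : ∀ ⦃u v : ℝ⦄, (u, v) ∈ D →
    pdu S.lam u v = -2 * S.ν u v * S.κ u v / (S.r u v) ^ 2 *
      ((S.Q u v) ^ 2 / S.r u v + m ^ 2 * (S.r u v) ^ 3 * ‖(S.φ u v)‖ ^ 2 / 2 +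
        Λ / 3 * (S.r u v) ^ 3 - S.ϖ u v)
  eq_ϖ_u : ∀ ⦃u v : ℝ⦄, (u, v) ∈ D →
    pdu S.ϖ u v = S.ν u v / 2 * m ^ 2 * (S.r u v) ^ 2 * ‖(S.φ u v)‖ ^ 2
      - S.Q u v * q * (S.φ u v * (starRingEnd ℂ) (S.ζ u v)).im
      + ‖(S.ζ u v)‖ ^ 2 / (2 * S.ν u v) *
        (1 - 2 * S.ϖ u v / S.r u v + (S.Q u v) ^ 2 / (S.r u v) ^ 2 - Λ / 3 * (S.r u v) ^ 2)
  eq_ϖ_v : ∀ ⦃u v : ℝ⦄, (u, v) ∈ D →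
    pdv S.ϖ u v = S.lam u v / 2 * m ^ 2 * (S.r u v) ^ 2 * ‖(S.φ u v)‖ ^ 2
      + S.Q u v * q * (S.φ u v * (starRingEnd ℂ) (S.θ u v)).im
      + ‖(S.θ u v)‖ ^ 2 / (2 * S.κ u v)
  eq_θ_u : ∀ ⦃u v : ℝ⦄, (u, v) ∈ D →
    S.Du q S.θ u v = -(S.ζ u v / ((S.r u v : ℝ) : ℂ)) * ((S.lam u v : ℝ) : ℂ)
      + ((S.ν u v * S.κ u v : ℝ) : ℂ) * S.φ u v / ((S.r u v : ℝ) : ℂ) *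
        (((m ^ 2 * (S.r u v) ^ 2 : ℝ) : ℂ) - Complex.I * (q : ℂ) * ((S.Q u v : ℝ) : ℂ))
  eq_ζ_v : ∀ ⦃u v : ℝ⦄, (u, v) ∈ D →
    pdvC S.ζ u v = -(S.θ u v / ((S.r u v : ℝ) : ℂ)) * ((S.ν u v : ℝ) : ℂ)
      + ((S.ν u v * S.κ u v : ℝ) : ℂ) * S.φ u v / ((S.r u v : ℝ) : ℂ) *
        (((m ^ 2 * (S.r u v) ^ 2 : ℝ) : ℂ) + Complex.I * (q : ℂ) * ((S.Q u v : ℝ) : ℂ))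
  eq_κ_u : ∀ ⦃u v : ℝ⦄, (u, v) ∈ D →
    pdu S.κ u v = S.κ u v / (S.r u v * S.ν u v) * ‖(S.ζ u v)‖ ^ 2
  eq_Q_u : ∀ ⦃u v : ℝ⦄, (u, v) ∈ D →
    pdu S.Q u v = -q * S.r u v * (S.φ u v * (starRingEnd ℂ) (S.ζ u v)).im
  eq_Q_v : ∀ ⦃u v : ℝ⦄, (u, v) ∈ D →
    pdv S.Q u v = q * S.r u v * (S.φ u v * (starRingEnd ℂ) (S.θ u v)).im
  eq_A_v : ∀ ⦃u v : ℝ⦄, (u, v) ∈ D →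
    pdv S.A u v = 2 * S.Q u v * S.ν u v * S.κ u v / (S.r u v) ^ 2
  constraint : ∀ ⦃u v : ℝ⦄, (u, v) ∈ D → S.lam u v = S.κ u v * (1 - S.μ Λ u v)

end FOVars

/-- Two tuples of unknowns agree on a set. -/
def AgreeOn (S S' : FOVars) (P : Set (ℝ × ℝ)) : Prop :=
  ∀ p ∈ P, S.r p.1 p.2 = S'.r p.1 p.2 ∧ S.ν p.1 p.2 = S'.ν p.1 p.2 ∧
    S.lam p.1 p.2 = S'.lam p.1 p.2 ∧ S.ϖ p.1 p.2 = S'.ϖ p.1 p.2 ∧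
    S.κ p.1 p.2 = S'.κ p.1 p.2 ∧ S.Q p.1 p.2 = S'.Q p.1 p.2 ∧
    S.A p.1 p.2 = S'.A p.1 p.2 ∧ S.φ p.1 p.2 = S'.φ p.1 p.2 ∧
    S.θ p.1 p.2 = S'.θ p.1 p.2 ∧ S.ζ p.1 p.2 = S'.ζ p.1 p.2

/-- `S` attains the prescribed characteristic initial data (with `v₀ = 0`),
ingoing data on `[0,a] × {0}` and outgoing data on `{0} × [0,b]`;
the gauge condition `ν₀ ≡ −1` is part of the data. -/
def MatchesData (S : FOVars) (a b : ℝ) (r₀ A₀ : ℝ → ℝ) (ζ₀ : ℝ → ℂ)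
    (lam₀ ϖ₀ κ₀ Q₀ : ℝ → ℝ) (θ₀ φ₀ : ℝ → ℂ) : Prop :=
  (∀ u ∈ Set.Icc (0:ℝ) a,
    S.r u 0 = r₀ u ∧ S.ζ u 0 = ζ₀ u ∧ S.A u 0 = A₀ u ∧ S.ν u 0 = -1) ∧
  (∀ v ∈ Set.Icc (0:ℝ) b,
    S.lam 0 v = lam₀ v ∧ S.ϖ 0 v = ϖ₀ v ∧ S.θ 0 v = θ₀ v ∧
    S.κ 0 v = κ₀ v ∧ S.φ 0 v = φ₀ v ∧ S.Q 0 v = Q₀ v)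

/-- A past set: together with any of its points it contains the
characteristic rectangle `[0,u] × [v₀,v]`. -/
def IsPastSet (v₀ : ℝ) (P : Set (ℝ × ℝ)) : Prop :=
  ∀ p ∈ P, Set.Icc (0:ℝ) p.1 ×ˢ Set.Icc v₀ p.2 ⊆ P

/-- `J⁻(T)`: union of the characteristic past rectangles of points of `T`. -/
def Jminus (v₀ : ℝ) (T : Set (ℝ × ℝ)) : Set (ℝ × ℝ) :=
  {p | ∃ p' ∈ T, 0 ≤ p.1 ∧ p.1 ≤ p'.1 ∧ v₀ ≤ p.2 ∧ p.2 ≤ p'.2}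

/-- `I⁻(T)`. -/
def Iminus (v₀ : ℝ) (T : Set (ℝ × ℝ)) : Set (ℝ × ℝ) :=
  {p | ∃ p' ∈ T, 0 ≤ p.1 ∧ p.1 < p'.1 ∧ v₀ ≤ p.2 ∧ p.2 < p'.2}

/-- `J⁺(T)` inside the maximal past set `P`. -/
def Jplus (P T : Set (ℝ × ℝ)) : Set (ℝ × ℝ) :=
  {p ∈ P | ∃ p' ∈ T, p'.1 ≤ p.1 ∧ p'.2 ≤ p.2}

/-- The characteristic initial value problem in the gauge of assumption (A),
under assumptions (A)–(D), together with its (unique) solution on the maximal past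
set `P ⊆ [0,U] × [v₀,∞)` containing the two initial hypersurfaces. -/
structure CharIVPBasic where
  S : FOVars
  Λ : ℝ
  q : ℝ
  m : ℝ
  U : ℝ
  v₀ : ℝ
  P : Set (ℝ × ℝ)
  hq : q ≠ 0
  hm : 0 ≤ m
  hU : 0 < U
  hv₀ : 0 ≤ v₀
  pastP : IsPastSet v₀ P
  initP : Set.Icc (0:ℝ) U ×ˢ {v₀} ∪ {(0:ℝ)} ×ˢ Set.Ici v₀ ⊆ P
  subP : P ⊆ Set.Icc (0:ℝ) U ×ˢ Set.Ici v₀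
  sol : S.IsSolOn Λ q m P
  maxP : ∀ (P' : Set (ℝ × ℝ)) (S' : FOVars), IsPastSet v₀ P' →
    P' ⊆ Set.Icc (0:ℝ) U ×ˢ Set.Ici v₀ → P ⊆ P' → S'.IsSolOn Λ q m P' →
    AgreeOn S S' P → P' ⊆ P
  -- (A)
  gaugeν : ∀ u ∈ Set.Icc (0:ℝ) U, S.ν u v₀ = -1
  gaugeκ : ∀ v ∈ Set.Ici v₀, S.κ 0 v = 1
  gaugeA : ∀ u ∈ Set.Icc (0:ℝ) U, S.A u v₀ = 0
  posr₀ : ∀ u ∈ Set.Icc (0:ℝ) U, 0 < S.r u v₀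
  posrEH : ∀ v ∈ Set.Ici v₀, 0 < S.r 0 v
  -- (B)
  reg_ν₀ : ContinuousOn (fun u => S.ν u v₀) (Set.Icc 0 U)
  reg_ζ₀ : ContinuousOn (fun u => S.ζ u v₀) (Set.Icc 0 U)
  reg_lam₀ : ContinuousOn (fun v => S.lam 0 v) (Set.Ici v₀)
  reg_θ₀ : ContinuousOn (fun v => S.θ 0 v) (Set.Ici v₀)
  reg_κ₀ : ContinuousOn (fun v => S.κ 0 v) (Set.Ici v₀)
  reg_r₀ : ContDiffOn ℝ 1 (fun u => S.r u v₀) (Set.Icc 0 U)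
  reg_A₀ : ContDiffOn ℝ 1 (fun u => S.A u v₀) (Set.Icc 0 U)
  reg_ϖ₀ : ContDiffOn ℝ 1 (fun v => S.ϖ 0 v) (Set.Ici v₀)
  reg_φ₀ : ContDiffOn ℝ 1 (fun v => S.φ 0 v) (Set.Ici v₀)
  reg_Q₀ : ContDiffOn ℝ 1 (fun v => S.Q 0 v) (Set.Ici v₀)
  -- (C)
  compat_r : ∀ u ∈ Set.Icc (0:ℝ) U, deriv (fun x => S.r x v₀) u = S.ν u v₀
  compat_φ : ∀ v ∈ Set.Ici v₀,
    deriv (fun y => S.φ 0 y) v = S.θ 0 v / ((S.r 0 v : ℝ) : ℂ)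
  compat_ϖ : ∀ v ∈ Set.Ici v₀, deriv (fun y => S.ϖ 0 y) v =
    S.lam 0 v / 2 * m ^ 2 * (S.r 0 v) ^ 2 * ‖(S.φ 0 v)‖ ^ 2
      + S.Q 0 v * q * (S.φ 0 v * (starRingEnd ℂ) (S.θ 0 v)).im
      + ‖(S.θ 0 v)‖ ^ 2 / (2 * S.κ 0 v)
  compat_Q : ∀ v ∈ Set.Ici v₀, deriv (fun y => S.Q 0 y) v =
    q * S.r 0 v * (S.φ 0 v * (starRingEnd ℂ) (S.θ 0 v)).im
  compat_lam : ∀ v ∈ Set.Ici v₀, S.lam 0 v =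
    S.κ 0 v * (1 - 2 * S.ϖ 0 v / S.r 0 v + (S.Q 0 v) ^ 2 / (S.r 0 v) ^ 2
      - Λ / 3 * (S.r 0 v) ^ 2)
  -- (D)
  negνEH : ∀ v ∈ Set.Ici v₀, S.ν 0 v < 0

/-- The black-hole setting: assumptions (A)–(G). -/
structure CharIVP extends CharIVPBasic where
  s : ℝ
  rm : ℝ
  rp : ℝ
  rC : ℝ
  ϖp : ℝ
  Qp : ℝ
  -- (E)
  hΛpos : 0 < Λ
  hs : 0 < s
  price : ∃ C > 0, ∀ v ∈ Set.Ici v₀,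
    ‖(S.φ 0 v)‖ + ‖(pdvC S.φ 0 v)‖ ≤ C * Real.exp (-s * v)
  -- (F): sub-extremal Reissner–Nordström–de Sitter reference solution
  hrm : 0 < rm
  hrmrp : rm < rp
  hrprC : rp < rC
  root_rm : oneMinusMu Λ ϖp Qp rm = 0
  root_rp : oneMinusMu Λ ϖp Qp rp = 0
  root_rC : oneMinusMu Λ ϖp Qp rC = 0
  hKp : 0 < Kofr Λ ϖp Qp rp
  hKm : Kofr Λ ϖp Qp rm ≠ 0
  lim_r : Filter.Tendsto (fun v => S.r 0 v) Filter.atTop (nhds rp)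
  lim_Q : Filter.Tendsto (fun v => S.Q 0 v) Filter.atTop (nhds Qp)
  lim_ϖ : Filter.Tendsto (fun v => S.ϖ 0 v) Filter.atTop (nhds ϖp)
  lim_K : Filter.Tendsto (fun v => S.Kfun Λ 0 v) Filter.atTop (nhds (Kofr Λ ϖp Qp rp))
  -- (G)
  lamEHpos : ∀ v ∈ Set.Ici v₀, 0 < S.lam 0 v

namespace CharIVP

/-- Surface gravity `K₊` of the event horizon of the reference solution. -/
def Kp (X : CharIVP) : ℝ := Kofr X.Λ X.ϖp X.Qp X.rp

/-- `K₋ := (1/2)|∂_r(1−μ)(r₋,ϖ₊,Q₊)|`. -/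
def Km (X : CharIVP) : ℝ := |Kofr X.Λ X.ϖp X.Qp X.rm|

/-- Level set `Γ_ϱ` of the area radius. -/
def Gam (X : CharIVP) (ϱ : ℝ) : Set (ℝ × ℝ) := {p ∈ X.P | X.S.r p.1 p.2 = ϱ}

/-- `c(s)`: `s` for `0 < s ≤ 2K₊ − η`, and `2K₊ − η` for `s ≥ 2K₊ − η`. -/
def csf (X : CharIVP) (η : ℝ) : ℝ := min X.s (2 * X.Kp - η)

/-- Dynamical surface gravity. -/
def KK (X : CharIVP) (u v : ℝ) : ℝ := X.S.Kfun X.Λ u v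

/-- The explicit constant `C_{K₋}` determined by `r₋, r₊, ϖ₊, Q₊, Λ`. -/
def CKminus (X : CharIVP) : ℝ :=
  4 * (4 * |X.ϖp| * (X.rp + X.rm) / X.rm ^ 4 +
    8 * X.Qp ^ 2 * (X.rp ^ 2 + X.rp * X.rm + X.rm ^ 2) / X.rm ^ 6 + |X.Λ| / 3)

/-- `c_μ^Y := |(1−μ)(Y,ϖ₊,Q₊)|`. -/
def cmuY (X : CharIVP) (Y : ℝ) : ℝ := |oneMinusMu X.Λ X.ϖp X.Qp Y|

end CharIVP

/-- The constants `η, δ, R, Δ, ε, Y, β, v₁` fixed as in the redshift, no-shift and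
early-blueshift propositions, together with the parametrisations `u_Y`, `v_Y` of the
spacelike curve `Γ_Y ∩ {v ≥ v₁}` and `u_γ` of the curve `γ`. -/
structure BlueshiftSetup (X : CharIVP) where
  η : ℝ
  δ : ℝ
  R : ℝ
  Δ : ℝ
  ε : ℝ
  Y : ℝ
  β : ℝ
  v₁ : ℝ
  hη0 : 0 < η
  hηK : η < X.Kp
  hδ0 : 0 < δ
  hδη : δ < η
  hR1 : 0 < X.rp - R
  hR2 : X.rp - R < δ
  hΔ0 : 0 < Δ
  hε0 : 0 < ε
  hΔε : Δ < ε
  hY1 : 0 < Y - X.rm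
  hY2 : Y - X.rm < Δ
  hβ0 : 0 < β
  hβ1 : β < X.csf η / (7 * X.Km)
  hv₁ : X.v₀ ≤ v₁
  uY : ℝ → ℝ
  vY : ℝ → ℝ
  uγ : ℝ → ℝ
  huY : ∀ v ∈ Set.Ici v₁, (uY v, v) ∈ X.P ∧ X.S.r (uY v) v = Y ∧ vY (uY v) = v
  hGamY : X.Gam Y ∩ {p : ℝ × ℝ | v₁ ≤ p.2} = (fun v => (uY v, v)) '' Set.Ici v₁
  hvY : ∀ u ∈ Set.Icc (0:ℝ) (uY v₁),
    X.S.r u (vY u) = Y ∧ v₁ ≤ vY u ∧ uY (vY u) = u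
  huγ : ∀ u ∈ Set.Icc (0:ℝ) (uY v₁), uγ ((1 + β) * vY u) = u
  huγ2 : ∀ v ∈ Set.Ici ((1 + β) * v₁),
    uγ v ∈ Set.Icc (0:ℝ) (uY v₁) ∧ (1 + β) * vY (uγ v) = v

namespace BlueshiftSetup

variable {X : CharIVP}

/-- `v_γ(u) := (1+β) v_Y(u)`. -/
def vγ (B : BlueshiftSetup X) (u : ℝ) : ℝ := (1 + B.β) * B.vY u

/-- The curve `γ`. -/
def gam (B : BlueshiftSetup X) : Set (ℝ × ℝ) :=
  (fun u => (u, B.vγ u)) '' Set.Icc (0:ℝ) (B.uY B.v₁)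

/-- `𝒞_s(u,v) := c(s)·v_Y(u) − 2(2K₋ + C̃ε)(v − v_Y(u))`. -/
def Cs (B : BlueshiftSetup X) (Ct u v : ℝ) : ℝ :=
  X.csf B.η * B.vY u - 2 * (2 * X.Km + Ct * B.ε) * (v - B.vY u)

end BlueshiftSetup


set_option maxHeartbeats 1000000 in
private lemma quartic_neg' (a w Q e1 e2 e3 x : ℝ) (ha : 0 < a) (he1 : 0 < e1)
    (h12 : e1 < e2) (h23 : e2 < e3)
    (r1 : e1^2 - 2*w*e1 + Q^2 - a*e1^4 = 0)
    (r2 : e2^2 - 2*w*e2 + Q^2 - a*e2^4 = 0)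
    (r3 : e3^2 - 2*w*e3 + Q^2 - a*e3^4 = 0)
    (hx1 : e1 < x) (hx2 : x < e2) :
    x^2 - 2*w*x + Q^2 - a*x^4 < 0 := by
  have hD : (e1-e2)*(e1-e3)*(e2-e3) ≠ 0 := by
    have a1 : e1 - e2 ≠ 0 := by intro h; nlinarith
    have a2 : e1 - e3 ≠ 0 := by intro h; nlinarith
    have a3 : e2 - e3 ≠ 0 := by intro h; nlinarith
    exact mul_ne_zero (mul_ne_zero a1 a2) a3
  have key : (x^2 - 2*w*x + Q^2 - a*x^4) * ((e1-e2)*(e1-e3)*(e2-e3)) =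
      (-a*(x+e1+e2+e3)*(x-e1)*(x-e2)*(x-e3)) * ((e1-e2)*(e1-e3)*(e2-e3)) := by
    linear_combination ((x-e2)*(x-e3)*(e2-e3)) * r1 - ((x-e1)*(x-e3)*(e1-e3)) * r2 +
      ((x-e1)*(x-e2)*(e1-e2)) * r3
  have heq : x^2 - 2*w*x + Q^2 - a*x^4 =
      -a*(x+e1+e2+e3)*(x-e1)*(x-e2)*(x-e3) := mul_right_cancel₀ hD key
  rw [heq]
  have hp : 0 < (x+e1+e2+e3)*((x-e1)*((e2-x)*(e3-x))) := by
    have : 0 < x + e1 + e2 + e3 := by linarith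
    have : 0 < x - e1 := by linarith
    have : 0 < e2 - x := by linarith
    have : 0 < e3 - x := by linarith
    positivity
  nlinarith [mul_pos ha hp]

private lemma rootpoly' (w Q a y : ℝ) (hy : 0 < y)
    (h : 1 - 2*w/y + Q^2/y^2 - a*y^2 = 0) :
    y^2 - 2*w*y + Q^2 - a*y^4 = 0 := by
  have hne : y ≠ 0 := ne_of_gt hy
  field_simp at h
  nlinarith [h, sq_nonneg y]

set_option maxHeartbeats 1000000 in
private lemma oneMinusMu_neg' (a w Q e1 e2 e3 x : ℝ) (ha : 0 < a) (he1 : 0 < e1)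
    (h12 : e1 < e2) (h23 : e2 < e3)
    (r1 : 1 - 2*w/e1 + Q^2/e1^2 - a*e1^2 = 0)
    (r2 : 1 - 2*w/e2 + Q^2/e2^2 - a*e2^2 = 0)
    (r3 : 1 - 2*w/e3 + Q^2/e3^2 - a*e3^2 = 0)
    (hx1 : e1 < x) (hx2 : x < e2) :
    1 - 2*w/x + Q^2/x^2 - a*x^2 < 0 := by
  have he2 : 0 < e2 := lt_trans he1 h12
  have he3 : 0 < e3 := lt_trans he2 h23
  have hx0 : 0 < x := lt_trans he1 hx1
  have hq := quartic_neg' a w Q e1 e2 e3 x ha he1 h12 h23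
    (rootpoly' w Q a e1 he1 r1) (rootpoly' w Q a e2 he2 r2)
    (rootpoly' w Q a e3 he3 r3) hx1 hx2
  have hid : (1 - 2*w/x + Q^2/x^2 - a*x^2) * x^2 =
      x^2 - 2*w*x + Q^2 - a*x^4 := by
    field_simp
  by_contra hc; push_neg at hc
  nlinarith [mul_nonneg hc (le_of_lt (pow_pos hx0 2))]

set_option maxHeartbeats 1000000 in
private lemma level_bound' (a ϱ Qp Wp Qv Wv Kv c M ε F L : ℝ) (hq0 : 0 < ϱ)
    (hF : F = 1 - 2*Wp/ϱ + Qp^2/ϱ^2 - a*ϱ^2)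
    (hL : L = 1 - (2*Wv/ϱ - Qv^2/ϱ^2 + a*ϱ^2))
    (hM : M = -F) (hM0 : 0 < M)
    (hε0 : 0 < ε) (hε1 : ε ≤ 1)
    (hεB : ε * (2*ϱ + (2*|Qp|+1)) ≤ M/2 * ϱ^2)
    (hQab : |Qv - Qp| ≤ ε) (hWab : |Wv - Wp| ≤ ε)
    (hc0 : 0 < c) (hκc : c ≤ Kv) (hκ1 : Kv ≤ 1) :
    -(3*M/2) ≤ Kv * L ∧ Kv * L ≤ -(c*M/2) := by
  obtain ⟨hdQ1, hdQ2⟩ := abs_le.mp hQab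
  obtain ⟨hdW1, hdW2⟩ := abs_le.mp hWab
  have hQp1 : Qp ≤ |Qp| := le_abs_self _
  have hQp2 : -|Qp| ≤ Qp := neg_abs_le _
  have hεnn : 0 ≤ ε := le_of_lt hε0
  have hid : (L - F) * ϱ^2 =
      -2*(Wv - Wp)*ϱ + ((Qv - Qp)^2 + 2*(Qv - Qp)*Qp) := by
    rw [hL, hF]; field_simp; ring
  have hb2 : (Qv - Qp)^2 ≤ ε := by
    nlinarith [mul_nonneg (by linarith : (0:ℝ) ≤ ε - (Qv - Qp))
        (by linarith : (0:ℝ) ≤ ε + (Qv - Qp)),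
      mul_nonneg hεnn (by linarith : (0:ℝ) ≤ 1 - ε)]
  have hb3 : 2*(Qv - Qp)*Qp ≤ 2*ε*|Qp| := by
    nlinarith [mul_nonneg (by linarith : (0:ℝ) ≤ ε - (Qv - Qp))
        (by linarith : (0:ℝ) ≤ |Qp| - Qp),
      mul_nonneg (by linarith : (0:ℝ) ≤ ε + (Qv - Qp))
        (by linarith : (0:ℝ) ≤ |Qp| + Qp)]
  have hb3' : -(2*ε*|Qp|) ≤ 2*(Qv - Qp)*Qp := by
    nlinarith [mul_nonneg (by linarith : (0:ℝ) ≤ ε + (Qv - Qp))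
        (by linarith : (0:ℝ) ≤ |Qp| + Qp),
      mul_nonneg (by linarith : (0:ℝ) ≤ ε - (Qv - Qp))
        (by linarith : (0:ℝ) ≤ |Qp| - Qp)]
  have hb1 : -2*(Wv - Wp)*ϱ ≤ 2*ε*ϱ := by
    nlinarith [mul_nonneg (by linarith : (0:ℝ) ≤ ε + (Wv - Wp)) (le_of_lt hq0)]
  have hb1' : -(2*ε*ϱ) ≤ -2*(Wv - Wp)*ϱ := by
    nlinarith [mul_nonneg (by linarith : (0:ℝ) ≤ ε - (Wv - Wp)) (le_of_lt hq0)]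
  have hubϱ : (L - F) * ϱ^2 ≤ M/2 * ϱ^2 := by
    rw [hid]; linarith [sq_nonneg (Qv - Qp)]
  have hlbϱ : -(M/2 * ϱ^2) ≤ (L - F) * ϱ^2 := by
    rw [hid]; linarith [sq_nonneg (Qv - Qp)]
  have hub : L ≤ F + M/2 := by
    by_contra hcc; push_neg at hcc
    have hpos : 0 < (L - (F + M/2)) * ϱ^2 :=
      mul_pos (by linarith) (pow_pos hq0 2)
    nlinarith [hpos, hubϱ]
  have hlb : F - M/2 ≤ L := by
    by_contra hcc; push_neg at hcc
    have hpos : 0 < ((F - M/2) - L) * ϱ^2 :=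
      mul_pos (by linarith) (pow_pos hq0 2)
    nlinarith [hpos, hlbϱ]
  have hFM : F = -M := by rw [hM]; ring
  have hLub : L ≤ -(M/2) := by linarith
  have hLlb : -(3*M/2) ≤ L := by linarith
  have hKv0 : 0 < Kv := lt_of_lt_of_le hc0 hκc
  constructor
  · nlinarith [mul_nonneg (by linarith : (0:ℝ) ≤ 1 - Kv)
      (by linarith : (0:ℝ) ≤ -L)]
  · nlinarith [mul_nonneg (by linarith : (0:ℝ) ≤ Kv - c)
      (by linarith : (0:ℝ) ≤ -(M/2) - L),
      mul_nonneg (le_of_lt hc0) (by linarith : (0:ℝ) ≤ -(M/2) - L),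
      mul_nonneg (by linarith : (0:ℝ) ≤ Kv - c) (le_of_lt hM0)]

set_option maxHeartbeats 1000000 in
/-- **Bounding `λ` away from zero along a constant-radius curve** (Lemma 5.3). -/
theorem lambda_bounded_away_on_level_set (X : CharIVP) (ϱ : ℝ)
    (h1 : X.rm < ϱ) (h2 : ϱ < X.rp) (hne : (X.Gam ϱ).Nonempty)
    (v₂ : ℝ) (hv₂ : X.v₀ ≤ v₂) (uϱ : ℝ → ℝ)
    (hpar : ∀ v ∈ Set.Ici v₂, (uϱ v, v) ∈ X.P ∧ X.S.r (uϱ v) v = ϱ)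
    (hyp : ∀ ε > 0, ∃ v₁, v₂ ≤ v₁ ∧ ∃ c > 0, ∀ v ∈ Set.Ici v₁,
      |X.S.Q (uϱ v) v - X.Qp| + |X.S.ϖ (uϱ v) v - X.ϖp| < ε ∧
      c ≤ X.S.κ (uϱ v) v ∧ X.S.κ (uϱ v) v ≤ 1) :
    ∃ v₁, v₂ ≤ v₁ ∧ ∃ C₁ > 0, ∃ C₂ > 0, ∀ v ∈ Set.Ici v₁,
      -C₂ ≤ X.S.lam (uϱ v) v ∧ X.S.lam (uϱ v) v ≤ -C₁ := by
  have hrm_pos : 0 < X.rm := X.hrm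
  have hrp_pos : 0 < X.rp := lt_trans X.hrm X.hrmrp
  have hq0 : 0 < ϱ := lt_trans X.hrm h1
  have hroot1 := X.root_rm
  have hroot2 := X.root_rp
  have hroot3 := X.root_rC
  rw [oneMinusMu] at hroot1 hroot2 hroot3
  have hFneg : 1 - 2*X.ϖp/ϱ + X.Qp^2/ϱ^2 - X.Λ/3*ϱ^2 < 0 := by
    have := oneMinusMu_neg' (X.Λ/3) X.ϖp X.Qp X.rm X.rp X.rC ϱ
      (by linarith [X.hΛpos]) hrm_pos X.hrmrp X.hrprC
      (by linarith [hroot1]) (by linarith [hroot2]) (by linarith [hroot3]) h1 h2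
    linarith
  set M : ℝ := -(1 - 2*X.ϖp/ϱ + X.Qp^2/ϱ^2 - X.Λ/3*ϱ^2) with hM
  have hM0 : 0 < M := by rw [hM]; linarith
  have hB0 : 0 < 2*ϱ + (2*|X.Qp|+1) := by positivity
  have hε0 : 0 < min 1 (M/2 * ϱ^2 / (2*ϱ + (2*|X.Qp|+1))) :=
    lt_min one_pos (by positivity)
  obtain ⟨v₁, hv₂₁, c, hc0, hall⟩ := hyp _ hε0
  set ε : ℝ := min 1 (M/2 * ϱ^2 / (2*ϱ + (2*|X.Qp|+1))) with hεdef
  have hε1 : ε ≤ 1 := min_le_left _ _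
  have hεB : ε * (2*ϱ + (2*|X.Qp|+1)) ≤ M/2 * ϱ^2 := by
    have h2' : ε ≤ M/2 * ϱ^2 / (2*ϱ + (2*|X.Qp|+1)) := min_le_right _ _
    calc ε * (2*ϱ + (2*|X.Qp|+1))
        ≤ M/2 * ϱ^2 / (2*ϱ + (2*|X.Qp|+1)) * (2*ϱ + (2*|X.Qp|+1)) :=
          mul_le_mul_of_nonneg_right h2' (le_of_lt hB0)
      _ = M/2 * ϱ^2 := div_mul_cancel₀ _ (ne_of_gt hB0)
  refine ⟨v₁, hv₂₁, c*M/2, by positivity, 3*M/2, by positivity, fun v hv => ?_⟩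
  have hvv₂ : v ∈ Set.Ici v₂ := le_trans hv₂₁ hv
  obtain ⟨hP, hr⟩ := hpar v hvv₂
  obtain ⟨hQϖ, hκc, hκ1⟩ := hall v hv
  have hcon := X.sol.constraint hP
  have hμ : X.S.μ X.Λ (uϱ v) v =
      2*(X.S.ϖ (uϱ v) v)/ϱ - (X.S.Q (uϱ v) v)^2/ϱ^2 + X.Λ/3*ϱ^2 := by
    rw [FOVars.μ, hr]
  have hQab : |X.S.Q (uϱ v) v - X.Qp| ≤ ε := by
    have hϖnn := abs_nonneg (X.S.ϖ (uϱ v) v - X.ϖp)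
    linarith [hQϖ]
  have hWab : |X.S.ϖ (uϱ v) v - X.ϖp| ≤ ε := by
    have hQnn := abs_nonneg (X.S.Q (uϱ v) v - X.Qp)
    linarith [hQϖ]
  have hkey := level_bound' (X.Λ/3) ϱ X.Qp X.ϖp (X.S.Q (uϱ v) v)
    (X.S.ϖ (uϱ v) v) (X.S.κ (uϱ v) v) c M ε
    (1 - 2*X.ϖp/ϱ + X.Qp^2/ϱ^2 - X.Λ/3*ϱ^2)
    (1 - X.S.μ X.Λ (uϱ v) v) hq0 rfl (by rw [hμ]) hM hM0 hε0 hε1 hεB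
    hQab hWab hc0 hκc hκ1
  rw [hcon]
  constructor
  · linarith [hkey.1]
  · linarith [hkey.2]
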